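/- Let T be a partition tree for length-n strings X and Y of maximum degree ℓ and height at most h, and let L ≥ 0. If ED(X, Y) ≤ L, then TD^L(X, Y) ≤ (2(ℓ−1)h + 1) · ED(X, Y), where TD^L(X, Y) is the L-shift-restricted tree distance evaluated at the root with shift 0. -/

import Mathlib

/-- Cost structure for the Levenshtein edit distance (formerly in Mathlib). -/
structure Levenshtein.Cost (α β δ : Type*) where
  delete : α → δ
  insert : β → δ
  substitute : α → β → δ

/-- The default cost structure: unit costs, free matching substitution (formerly in Mathlib). -/
def Levenshtein.defaultCost {α : Type*} [DecidableEq α] : Levenshtein.Cost α α ℕ where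
  delete _ := 1
  insert _ := 1
  substitute a b := if a = b then 0 else 1

/-- Inner step of the Levenshtein dynamic program (formerly in Mathlib). -/
def Levenshtein.impl {α β δ : Type*} [Add δ] [Min δ] (C : Levenshtein.Cost α β δ)
    (xs : List α) (y : β) (d : {r : List δ // 0 < r.length}) : {r : List δ // 0 < r.length} :=
  let ⟨ds, w⟩ := d
  xs.zip (ds.zip ds.tail) |>.foldr
    (init := ⟨[C.insert y + ds.getLast (List.length_pos_iff.mp w)], by simp⟩)
    (fun ⟨x, d₀, d₁⟩ ⟨r, w⟩ =>
      ⟨min (C.delete x + r[0]) (min (C.insert y + d₀) (C.substitute x y + d₁)) :: r, by simp⟩)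

/-- Levenshtein distances between all suffixes of `xs` and `ys` (formerly in Mathlib). -/
def suffixLevenshtein {α β δ : Type*} [Zero δ] [Add δ] [Min δ] (C : Levenshtein.Cost α β δ)
    (xs : List α) (ys : List β) : {r : List δ // 0 < r.length} :=
  ys.foldr
    (Levenshtein.impl C xs)
    (xs.foldr (init := ⟨[0], by simp⟩) (fun a ⟨r, w⟩ => ⟨(C.delete a + r[0]) :: r, by simp⟩))

/-- The Levenshtein edit distance with cost structure `C` (formerly in Mathlib). -/
def levenshtein {α β δ : Type*} [Zero δ] [Add δ] [Min δ] (C : Levenshtein.Cost α β δ)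
    (xs : List α) (ys : List β) : δ :=
  let ⟨r, _⟩ := suffixLevenshtein C xs ys
  r[0]

/-- Levenshtein edit distance between two lists (unit costs). -/
def ED {α : Type*} [DecidableEq α] (X Y : List α) : ℕ :=
  levenshtein Levenshtein.defaultCost X Y

/-- The fragment `X[a..b)` (with out-of-range indices clamped). -/
def strSlice {α : Type*} (X : List α) (a b : ℕ) : List α := (X.drop a).take (b - a)

/-- The fragment `Y[a..b)` for integer indices (clamped to the valid range). -/
def strSliceZ {α : Type*} (Y : List α) (a b : ℤ) : List α :=
  (Y.drop a.toNat).take (b.toNat - a.toNat)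

/-- A (node of a) partition tree: a leaf spans one position, an internal node records
the interval of leaves it spans and its list of children. -/
inductive PTree where
  | leaf (i : ℕ) : PTree
  | node (lo hi : ℕ) (children : List PTree) : PTree

mutual
/-- Well-formedness: the tree `t` spans exactly the interval `[lo, hi)` of leaves and
the children of each node span consecutive subintervals. -/
inductive PTree.WF : PTree → ℕ → ℕ → Prop where
  | leaf (i : ℕ) : PTree.WF (.leaf i) i (i + 1)
  | node (lo hi : ℕ) (cs : List PTree) (hne : cs ≠ []) (h : PTree.WFs cs lo hi) :
      PTree.WF (.node lo hi cs) lo hi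
/-- A list of trees spans consecutive intervals covering `[a, c)`. -/
inductive PTree.WFs : List PTree → ℕ → ℕ → Prop where
  | nil (a : ℕ) : PTree.WFs [] a a
  | cons (t : PTree) (ts : List PTree) (a b c : ℕ) :
      PTree.WF t a b → PTree.WFs ts b c → PTree.WFs (t :: ts) a c
end

/-- The `L`-shift-restricted tree distance `TD^L_{v,s}`: at a leaf it is the edit distance
of the corresponding (shifted) fragments, at an internal node it is the sum over children
of `min_{s' ∈ [−L,L]} (TD^L_{child,s'} + 2|s − s'|)`. -/
noncomputable def TD {α : Type*} [DecidableEq α] (X Y : List α) (L : ℕ) : PTree → ℤ → ℕ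
  | .leaf i, s => ED (strSlice X i (i + 1)) (strSliceZ Y ((i : ℤ) + s) ((i : ℤ) + 1 + s))
  | .node _ _ cs, s =>
      (cs.attach.map (fun c =>
        (Finset.Icc (-(L : ℤ)) (L : ℤ)).inf'
          ⟨0, by simp⟩
          (fun s' => TD X Y L c.1 s' + 2 * (s - s').natAbs))).sum
termination_by t _ => sizeOf t
decreasing_by
  have := List.sizeOf_lt_of_mem c.2
  simp only [PTree.node.sizeOf_spec]
  omega

/-- The height of a partition tree: maximum distance from the root to a leaf. -/
def PTree.height : PTree → ℕ
  | .leaf _ => 0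
  | .node _ _ cs => (cs.attach.map (fun c => PTree.height c.1)).foldr max 0 + 1
termination_by t => sizeOf t
decreasing_by
  have := List.sizeOf_lt_of_mem c.2
  simp only [PTree.node.sizeOf_spec]
  omega

/-- The maximum degree (number of children of a node) of a partition tree. -/
def PTree.maxDeg : PTree → ℕ
  | .leaf _ => 0
  | .node _ _ cs => max cs.length ((cs.attach.map (fun c => PTree.maxDeg c.1)).foldr max 0)
termination_by t => sizeOf t
decreasing_by
  have := List.sizeOf_lt_of_mem c.2
  simp only [PTree.node.sizeOf_spec]
  omega

section LevAux
variable {α β δ : Type*} [Zero δ] [Add δ] [Min δ] (C : Levenshtein.Cost α β δ)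

theorem levenshtein_eq_getElem (xs : List α) (ys : List β) :
    levenshtein C xs ys = (suffixLevenshtein C xs ys).1[0]'(suffixLevenshtein C xs ys).2 := rfl

theorem Levenshtein.impl_cons (x : α) (xs : List α) (y : β) (d e : δ) (ds : List δ) (w) :
    Levenshtein.impl C (x :: xs) y ⟨d :: e :: ds, w⟩ =
      ⟨min (C.delete x + (Levenshtein.impl C xs y ⟨e :: ds, by simp⟩).1[0]'
          (Levenshtein.impl C xs y ⟨e :: ds, by simp⟩).2)
        (min (C.insert y + d) (C.substitute x y + e)) ::
          (Levenshtein.impl C xs y ⟨e :: ds, by simp⟩).1, by simp⟩ := rfl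

theorem Levenshtein.impl_length (xs : List α) (y : β) (d : {r : List δ // 0 < r.length})
    (w : d.1.length = xs.length + 1) : (Levenshtein.impl C xs y d).1.length = xs.length + 1 := by
  induction xs generalizing d with
  | nil => obtain ⟨ds, _⟩ := d; rfl
  | cons x xs ih =>
    obtain ⟨_ | ⟨d1, _ | ⟨d2, ds⟩⟩, hw⟩ := d
    · simp at hw
    · simp at w
    · rw [Levenshtein.impl_cons]
      simp only [List.length_cons]
      rw [ih]
      simpa using w

theorem suffixLevenshtein_length (xs : List α) (ys : List β) :
    (suffixLevenshtein C xs ys).1.length = xs.length + 1 := by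
  induction ys with
  | nil =>
    induction xs with
    | nil => rfl
    | cons x xs ih => exact congrArg (· + 1) ih
  | cons y ys ih => exact Levenshtein.impl_length C xs y _ ih

theorem suffixLevenshtein_cons_tail (x : α) (xs : List α) (ys : List β) :
    (suffixLevenshtein C (x :: xs) ys).1.tail = (suffixLevenshtein C xs ys).1 := by
  induction ys with
  | nil => rfl
  | cons y ys ih =>
    show (Levenshtein.impl C (x :: xs) y (suffixLevenshtein C (x :: xs) ys)).1.tail =
      (Levenshtein.impl C xs y (suffixLevenshtein C xs ys)).1
    have hl := suffixLevenshtein_length C (x :: xs) ys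
    revert ih hl
    generalize suffixLevenshtein C (x :: xs) ys = S
    generalize suffixLevenshtein C xs ys = T
    intro ih hl
    obtain ⟨_ | ⟨d, _ | ⟨e, ds⟩⟩, hS⟩ := S
    · simp at hS
    · simp at hl
    · obtain ⟨T, hT⟩ := T
      simp only [List.tail_cons] at ih
      subst ih
      rfl

theorem suffixLevenshtein_cons₂ (xs : List α) (y : β) (ys : List β) :
    suffixLevenshtein C xs (y :: ys) = Levenshtein.impl C xs y (suffixLevenshtein C xs ys) := rfl

theorem Levenshtein.impl_cons_getElem (x : α) (xs : List α) (y : β)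
    (S T : {r : List δ // 0 < r.length}) (ht : S.1.tail = T.1)
    (hl : S.1.length = (x :: xs).length + 1) :
    (Levenshtein.impl C (x :: xs) y S).1[0]'(Levenshtein.impl C (x :: xs) y S).2 =
      min (C.delete x + (Levenshtein.impl C xs y T).1[0]'(Levenshtein.impl C xs y T).2)
        (min (C.insert y + S.1[0]'S.2) (C.substitute x y + T.1[0]'T.2)) := by
  obtain ⟨_ | ⟨d, _ | ⟨e, ds⟩⟩, hS⟩ := S
  · simp at hS
  · simp at hl
  · obtain ⟨T, hT⟩ := T
    simp only [List.tail_cons] at ht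
    subst ht
    rfl

theorem Levenshtein.impl_nil_getElem (y : β) (S : {r : List δ // 0 < r.length})
    (hl : S.1.length = ([] : List α).length + 1) :
    (Levenshtein.impl C ([] : List α) y S).1[0]'(Levenshtein.impl C ([] : List α) y S).2 =
      C.insert y + S.1[0]'S.2 := by
  obtain ⟨_ | ⟨a, _ | ⟨b, l⟩⟩, hS⟩ := S
  · simp at hS
  · rfl
  · simp at hl

theorem levenshtein_cons_cons (x : α) (xs : List α) (y : β) (ys : List β) :
    levenshtein C (x :: xs) (y :: ys) =
      min (C.delete x + levenshtein C xs (y :: ys))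
        (min (C.insert y + levenshtein C (x :: xs) ys)
          (C.substitute x y + levenshtein C xs ys)) := by
  have ht := suffixLevenshtein_cons_tail C x xs ys
  have hl := suffixLevenshtein_length C (x :: xs) ys
  rw [levenshtein_eq_getElem, levenshtein_eq_getElem C xs (y :: ys),
    levenshtein_eq_getElem C (x :: xs) ys, levenshtein_eq_getElem C xs ys]
  exact Levenshtein.impl_cons_getElem C x xs y _ _ ht hl

@[simp] theorem levenshtein_nil_cons (y : β) (ys : List β) :
    levenshtein C [] (y :: ys) = C.insert y + levenshtein C [] ys := by
  have hl := suffixLevenshtein_length C [] ys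
  rw [levenshtein_eq_getElem, levenshtein_eq_getElem C [] ys]
  exact Levenshtein.impl_nil_getElem C y _ hl

@[simp] theorem levenshtein_nil_nil : levenshtein C [] [] = 0 := rfl

@[simp] theorem levenshtein_cons_nil (x : α) (xs : List α) :
    levenshtein C (x :: xs) [] = C.delete x + levenshtein C xs [] := rfl

end LevAux

@[simp] theorem Levenshtein.defaultCost_delete {α : Type*} [DecidableEq α] (a : α) :
    (Levenshtein.defaultCost : Levenshtein.Cost α α ℕ).delete a = 1 := rfl
@[simp] theorem Levenshtein.defaultCost_insert {α : Type*} [DecidableEq α] (a : α) :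
    (Levenshtein.defaultCost : Levenshtein.Cost α α ℕ).insert a = 1 := rfl
@[simp] theorem Levenshtein.defaultCost_substitute {α : Type*} [DecidableEq α] (a b : α) :
    (Levenshtein.defaultCost : Levenshtein.Cost α α ℕ).substitute a b = if a = b then 0 else 1 := rfl

set_option linter.unusedSectionVars false

section Aux
variable {α : Type*} [DecidableEq α]

theorem lev_le_one (A B : List α) (hA : A.length ≤ 1) (hB : B.length ≤ 1) : ED A B ≤ 1 := by
  match A, B with
  | [], [] => simp [ED, levenshtein_nil_nil]
  | [], [b] => simp [ED, levenshtein_nil_nil]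
  | [a], [] => simp [ED, levenshtein_nil_nil]
  | [a], [b] =>
    simp only [ED, levenshtein_cons_cons, levenshtein_nil_nil, levenshtein_nil_cons,
      levenshtein_cons_nil, Levenshtein.defaultCost_delete, Levenshtein.defaultCost_insert,
      Levenshtein.defaultCost_substitute]
    split <;> omega
  | [], (b::b'::B') => simp at hB
  | (a::a'::A'), _ => simp at hA
  | (a::A'), (b::b'::B') => simp at hB

theorem lev_single_nil (a : α) : ED [a] ([] : List α) = 1 := by
  simp [ED, levenshtein_nil_nil]

theorem lev_nil (X : List α) : ED X ([] : List α) = X.length := by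
  induction X with
  | nil => simp [ED, levenshtein_nil_nil]
  | cons x X ih => simp [ED, levenshtein_cons_nil] at ih ⊢; omega

theorem lev_self_single (a : α) : ED [a] [a] = 0 := by
  simp [ED, levenshtein_cons_cons, levenshtein_nil_nil, levenshtein_nil_cons, levenshtein_cons_nil]

theorem strSlice_cons (x : α) (X : List α) (p q : ℕ) :
    strSlice (x :: X) (p + 1) (q + 1) = strSlice X p q := by
  simp [strSlice]

theorem strSlice_len_le (X : List α) (p : ℕ) : (strSlice X p (p + 1)).length ≤ 1 := by
  simp [strSlice]

theorem strSliceZ_len_le (Y : List α) (a b : ℤ) (h : b ≤ a + 1) :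
    (strSliceZ Y a b).length ≤ 1 := by
  simp only [strSliceZ, List.length_take, List.length_drop]
  omega

theorem strSliceZ_cons (y : α) (Y : List α) (a b : ℤ) (ha : 0 ≤ a) :
    strSliceZ (y :: Y) (a + 1) (b + 1) = strSliceZ Y a b := by
  unfold strSliceZ
  rw [show (a + 1).toNat = a.toNat + 1 by omega, List.drop_succ_cons]
  congr 1
  omega

theorem strSlice_zero_one (x : α) (X : List α) : strSlice (x :: X) 0 1 = [x] := by
  simp [strSlice]

theorem strSliceZ_zero_one (y : α) (Y : List α) : strSliceZ (y :: Y) 0 1 = [y] := by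
  simp [strSliceZ]

end Aux

section Cert
variable {α : Type*} [DecidableEq α]

structure Cert (X Y : List α) where
  s : ℕ → ℤ
  C : ℕ → ℕ
  hs0 : s 0 = 0
  hC0 : C 0 = 0
  mono : ∀ p q, p ≤ q → C p ≤ C q
  sdiff : ∀ p q, p ≤ q → (s q - s p).natAbs ≤ C q - C p
  pos : ∀ p : ℕ, 0 ≤ (p : ℤ) + s p
  top : C X.length ≤ ED X Y
  leaf : ∀ p, p < X.length →
    ED (strSlice X p (p + 1)) (strSliceZ Y ((p : ℤ) + s p) ((p : ℤ) + 1 + s p)) ≤ C (p + 1) - C p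


def nilCert (Y : List α) : Cert ([] : List α) Y where
  s := fun _ => 0
  C := fun _ => 0
  hs0 := rfl
  hC0 := rfl
  mono := fun _ _ _ => le_rfl
  sdiff := fun _ _ _ => by simp
  pos := fun p => by simp
  top := Nat.zero_le _
  leaf := fun p hp => by simp at hp

theorem cert_nonempty_aux : ∀ (N : ℕ) (X Y : List α), X.length + Y.length ≤ N → Nonempty (Cert X Y) := by
  intro N
  induction N with
  | zero =>
    intro X Y hlen
    have hX : X = [] := by cases X <;> simp at hlen ⊢
    subst hX
    exact ⟨nilCert Y⟩
  | succ N IH =>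
    intro X Y hlen
    match X, Y with
    | [], Y =>
      exact ⟨nilCert Y⟩
    | (x :: X'), [] =>
      refine ⟨⟨fun _ => 0, fun p => p, rfl, rfl, fun _ _ h => h, fun _ _ _ => by simp,
        fun p => by simp, by rw [lev_nil], ?_⟩⟩
      intro p hp
      rw [show ((p : ℤ) + 0) = (p : ℤ) by ring, show ((p : ℤ) + 1 + 0) = (p : ℤ) + 1 by ring]
      have h1 : strSliceZ ([] : List α) (p : ℤ) ((p : ℤ) + 1) = [] := by simp [strSliceZ]
      rw [h1]
      have h2 : (strSlice (x :: X') p (p + 1)).length ≤ 1 := strSlice_len_le _ _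
      calc ED (strSlice (x :: X') p (p + 1)) [] = (strSlice (x :: X') p (p + 1)).length :=
            lev_nil _
        _ ≤ 1 := h2
        _ ≤ p + 1 - p := by omega
    | (x :: X'), (y :: Y') =>
      have hmin : ED (x :: X') (y :: Y') =
          min (1 + ED X' (y :: Y'))
            (min (1 + ED (x :: X') Y') ((if x = y then 0 else 1) + ED X' Y')) := by
        simp [ED, levenshtein_cons_cons]
      have hcases : ED (x :: X') (y :: Y') = 1 + ED X' (y :: Y') ∨
          ED (x :: X') (y :: Y') = 1 + ED (x :: X') Y' ∨
          ED (x :: X') (y :: Y') = (if x = y then 0 else 1) + ED X' Y' := by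
        omega
      rcases hcases with hc | hc | hc
      · -- delete branch
        obtain ⟨c1⟩ := IH X' (y :: Y') (by simp at hlen ⊢; omega)
        refine ⟨⟨fun p => if p = 0 then 0 else c1.s (p - 1) - 1,
          fun p => if p = 0 then 0 else c1.C (p - 1) + 1, by simp, by simp, ?_, ?_, ?_, ?_, ?_⟩⟩
        · intro p q hpq
          rcases Nat.eq_zero_or_pos p with rfl | hp
          · rcases Nat.eq_zero_or_pos q with rfl | hq
            · simp
            · have := c1.mono 0 (q - 1) (by omega)
              simp only [if_neg (by omega : ¬ q = 0)]
              simp only [reduceIte]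
              omega
          · have := c1.mono (p - 1) (q - 1) (by omega)
            simp only [if_neg (by omega : ¬ p = 0), if_neg (by omega : ¬ q = 0)]
            omega
        · intro p q hpq
          rcases Nat.eq_zero_or_pos p with rfl | hp
          · rcases Nat.eq_zero_or_pos q with rfl | hq
            · simp
            · have h1 := c1.sdiff 0 (q - 1) (by omega)
              have h2 := c1.hs0
              have h3 := c1.hC0
              simp only [if_neg (by omega : ¬ q = 0), reduceIte]
              omega
          · have h1 := c1.sdiff (p - 1) (q - 1) (by omega)
            simp only [if_neg (by omega : ¬ p = 0), if_neg (by omega : ¬ q = 0)]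
            omega
        · intro p
          rcases Nat.eq_zero_or_pos p with rfl | hp
          · simp
          · have := c1.pos (p - 1)
            simp only [if_neg (by omega : ¬ p = 0)]
            omega
        · -- top
          have := c1.top
          simp only [List.length_cons, if_neg (by omega : ¬ X'.length + 1 = 0),
            Nat.add_sub_cancel]
          omega
        · -- leaf
          intro p hp
          rcases Nat.eq_zero_or_pos p with rfl | hp0
          · simp only [reduceIte, Nat.cast_zero]
            rw [show ((0 : ℤ) + 0) = 0 by ring, show ((0 : ℤ) + 1 + 0) = 0 + 1 by ring,
              strSlice_zero_one]
            rw [show ((0 : ℤ) + 1) = 1 by ring, strSliceZ_zero_one]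
            have := lev_le_one (α := α) [x] [y] (by simp) (by simp)
            simp only [if_neg (by omega : ¬ (1 : ℕ) = 0), reduceIte]
            have := c1.hC0
            omega
          · obtain ⟨p', rfl⟩ : ∃ p', p = p' + 1 := ⟨p - 1, by omega⟩
            have hkey := c1.leaf p' (by simp at hp; omega)
            simp only [if_neg (by omega : ¬ p' + 1 = 0), if_neg (by omega : ¬ p' + 1 + 1 = 0),
              Nat.add_sub_cancel]
            rw [strSlice_cons]
            rw [show ((p' + 1 : ℕ) : ℤ) + (c1.s p' - 1) = (p' : ℤ) + c1.s p' by
              push_cast; ring]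
            rw [show ((p' + 1 : ℕ) : ℤ) + 1 + (c1.s p' - 1) = (p' : ℤ) + 1 + c1.s p' by
              push_cast; ring]
            omega
      · -- insert branch
        obtain ⟨c1⟩ := IH (x :: X') Y' (by simp at hlen ⊢; omega)
        refine ⟨⟨fun p => if p = 0 then 0 else c1.s p + 1,
          fun p => if p = 0 then 0 else c1.C p + 1, by simp, by simp, ?_, ?_, ?_, ?_, ?_⟩⟩
        · intro p q hpq
          rcases Nat.eq_zero_or_pos p with rfl | hp
          · rcases Nat.eq_zero_or_pos q with rfl | hq
            · simp
            · have := c1.mono 0 q (by omega)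
              simp only [if_neg (by omega : ¬ q = 0), reduceIte]
              omega
          · have := c1.mono p q hpq
            simp only [if_neg (by omega : ¬ p = 0), if_neg (by omega : ¬ q = 0)]
            omega
        · intro p q hpq
          rcases Nat.eq_zero_or_pos p with rfl | hp
          · rcases Nat.eq_zero_or_pos q with rfl | hq
            · simp
            · have h1 := c1.sdiff 0 q (by omega)
              have h2 := c1.hs0
              have h3 := c1.hC0
              simp only [if_neg (by omega : ¬ q = 0), reduceIte]
              omega
          · have h1 := c1.sdiff p q hpq
            simp only [if_neg (by omega : ¬ p = 0), if_neg (by omega : ¬ q = 0)]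
            omega
        · intro p
          rcases Nat.eq_zero_or_pos p with rfl | hp
          · simp
          · have := c1.pos p
            simp only [if_neg (by omega : ¬ p = 0)]
            omega
        · have := c1.top
          simp only [List.length_cons] at this ⊢
          simp only [if_neg (by omega : ¬ X'.length + 1 = 0)]
          omega
        · intro p hp
          rcases Nat.eq_zero_or_pos p with rfl | hp0
          · simp only [reduceIte, Nat.cast_zero]
            rw [show ((0 : ℤ) + 0) = 0 by ring, show ((0 : ℤ) + 1 + 0) = 0 + 1 by ring,
              strSlice_zero_one]
            rw [show ((0 : ℤ) + 1) = 1 by ring, strSliceZ_zero_one]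
            have h1 := lev_le_one (α := α) [x] [y] (by simp) (by simp)
            simp only [if_neg (by omega : ¬ (1 : ℕ) = 0), reduceIte]
            omega
          · have hkey := c1.leaf p hp
            have hpos := c1.pos p
            simp only [if_neg (by omega : ¬ p = 0), if_neg (by omega : ¬ p + 1 = 0)]
            rw [show ((p : ℕ) : ℤ) + (c1.s p + 1) = ((p : ℤ) + c1.s p) + 1 by ring]
            rw [show ((p : ℕ) : ℤ) + 1 + (c1.s p + 1) = ((p : ℤ) + 1 + c1.s p) + 1 by ring]
            rw [strSliceZ_cons y Y' _ _ (by omega)]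
            omega
      · -- substitute branch
        obtain ⟨c1⟩ := IH X' Y' (by simp at hlen ⊢; omega)
        refine ⟨⟨fun p => if p = 0 then 0 else c1.s (p - 1),
          fun p => if p = 0 then 0 else c1.C (p - 1) + (if x = y then 0 else 1),
          by simp, by simp, ?_, ?_, ?_, ?_, ?_⟩⟩
        · intro p q hpq
          rcases Nat.eq_zero_or_pos p with rfl | hp
          · rcases Nat.eq_zero_or_pos q with rfl | hq
            · simp
            · have := c1.mono 0 (q - 1) (by omega)
              simp only [if_neg (by omega : ¬ q = 0), reduceIte]
              split <;> omega
          · have := c1.mono (p - 1) (q - 1) (by omega)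
            simp only [if_neg (by omega : ¬ p = 0), if_neg (by omega : ¬ q = 0)]
            split <;> omega
        · intro p q hpq
          rcases Nat.eq_zero_or_pos p with rfl | hp
          · rcases Nat.eq_zero_or_pos q with rfl | hq
            · simp
            · have h1 := c1.sdiff 0 (q - 1) (by omega)
              have h2 := c1.hs0
              have h3 := c1.hC0
              simp only [if_neg (by omega : ¬ q = 0), reduceIte]
              split <;> omega
          · have h1 := c1.sdiff (p - 1) (q - 1) (by omega)
            simp only [if_neg (by omega : ¬ p = 0), if_neg (by omega : ¬ q = 0)]
            split <;> omega
        · intro p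
          rcases Nat.eq_zero_or_pos p with rfl | hp
          · simp
          · have := c1.pos (p - 1)
            simp only [if_neg (by omega : ¬ p = 0)]
            omega
        · have := c1.top
          simp only [List.length_cons, if_neg (by omega : ¬ X'.length + 1 = 0),
            Nat.add_sub_cancel]
          by_cases hxy : x = y
          · simp only [if_pos hxy] at hc ⊢
            omega
          · simp only [if_neg hxy] at hc ⊢
            omega
        · intro p hp
          rcases Nat.eq_zero_or_pos p with rfl | hp0
          · simp only [reduceIte, Nat.cast_zero]
            rw [show ((0 : ℤ) + 0) = 0 by ring, show ((0 : ℤ) + 1 + 0) = 0 + 1 by ring,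
              strSlice_zero_one]
            rw [show ((0 : ℤ) + 1) = 1 by ring, strSliceZ_zero_one]
            simp only [if_neg (by omega : ¬ (1 : ℕ) = 0), reduceIte]
            have := c1.hC0
            by_cases hxy : x = y
            · subst hxy
              have := lev_self_single (α := α) x
              simp only [reduceIte]
              omega
            · have := lev_le_one (α := α) [x] [y] (by simp) (by simp)
              simp only [if_neg hxy]
              omega
          · obtain ⟨p', rfl⟩ : ∃ p', p = p' + 1 := ⟨p - 1, by omega⟩
            have hkey := c1.leaf p' (by simp at hp; omega)
            have hpos := c1.pos p'
            simp only [if_neg (by omega : ¬ p' + 1 = 0), if_neg (by omega : ¬ p' + 1 + 1 = 0),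
              Nat.add_sub_cancel]
            rw [strSlice_cons]
            rw [show ((p' + 1 : ℕ) : ℤ) + c1.s p' = ((p' : ℤ) + c1.s p') + 1 by
              push_cast; ring]
            rw [show ((p' + 1 : ℕ) : ℤ) + 1 + c1.s p' = ((p' : ℤ) + 1 + c1.s p') + 1 by
              push_cast; ring]
            rw [strSliceZ_cons y Y' _ _ (by omega)]
            split <;> omega

theorem cert_nonempty (X Y : List α) : Nonempty (Cert X Y) :=
  cert_nonempty_aux (X.length + Y.length) X Y le_rfl

end Cert

section Main
set_option linter.unusedSectionVars false
variable {α : Type*} [DecidableEq α]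

mutual
theorem PTree.WF.le_bounds : ∀ {t : PTree} {a b : ℕ}, PTree.WF t a b → a ≤ b
  | _, _, _, .leaf i => Nat.le_succ i
  | _, _, _, .node _ _ _ _ h => h.le_bounds
theorem PTree.WFs.le_bounds : ∀ {cs : List PTree} {a b : ℕ}, PTree.WFs cs a b → a ≤ b
  | _, _, _, .nil a => le_rfl
  | _, _, _, .cons t ts a b c h1 h2 => le_trans h1.le_bounds h2.le_bounds
end

theorem le_foldr_max {x : ℕ} : ∀ {l : List ℕ}, x ∈ l → x ≤ l.foldr max 0 := by
  intro l
  induction l with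
  | nil => intro h; simp at h
  | cons a l ih =>
    intro h
    rcases List.mem_cons.1 h with rfl | h
    · exact le_max_left _ _
    · exact le_trans (ih h) (le_max_right _ _)

theorem TD_node {X Y : List α} {L : ℕ} (lo hi : ℕ) (cs : List PTree) (s : ℤ) :
    TD X Y L (.node lo hi cs) s = (cs.map (fun t' =>
        (Finset.Icc (-(L : ℤ)) (L : ℤ)).inf' ⟨0, by simp⟩
          (fun s' => TD X Y L t' s' + 2 * (s - s').natAbs))).sum := by
  rw [TD]
  rw [List.attach_map_val (l := cs) (f := fun t' =>
        (Finset.Icc (-(L : ℤ)) (L : ℤ)).inf' ⟨0, by simp⟩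
          (fun s' => TD X Y L t' s' + 2 * (s - s').natAbs))]

theorem height_node (lo hi : ℕ) (cs : List PTree) :
    PTree.height (.node lo hi cs) = (cs.map PTree.height).foldr max 0 + 1 := by
  rw [PTree.height, List.attach_map_val]

theorem maxDeg_node (lo hi : ℕ) (cs : List PTree) :
    PTree.maxDeg (.node lo hi cs) = max cs.length ((cs.map PTree.maxDeg).foldr max 0) := by
  rw [PTree.maxDeg, List.attach_map_val]

theorem sMem {X Y : List α} (c : Cert X Y) {n L : ℕ} (hXn : X.length = n)
    (hEDL : ED X Y ≤ L) (a : ℕ) (ha : a ≤ n) :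
    c.s a ∈ Finset.Icc (-(L : ℤ)) (L : ℤ) := by
  have h3 := c.sdiff 0 a (Nat.zero_le a)
  have h4 := c.mono a n ha
  have h5 := c.top
  rw [hXn] at h5
  have h6 := c.hs0
  have h7 := c.hC0
  simp only [Finset.mem_Icc]
  omega

theorem list_bound {X Y : List α} (c : Cert X Y) {n L : ℕ} (hXn : X.length = n)
    (hEDL : ED X Y ≤ L) (K : ℕ) (A : ℕ) :
    ∀ (cs : List PTree) (a b : ℕ), PTree.WFs cs a b → A ≤ a → b ≤ n →
    (∀ t' ∈ cs, ∀ a' b', PTree.WF t' a' b' → b' ≤ n →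
       TD X Y L t' (c.s a') ≤ K * (c.C b' - c.C a')) →
    (cs.map (fun t' => (Finset.Icc (-(L : ℤ)) (L : ℤ)).inf' ⟨0, by simp⟩
        (fun s' => TD X Y L t' s' + 2 * (c.s A - s').natAbs))).sum
      ≤ K * (c.C b - c.C a) + 2 * (c.C a - c.C A) + 2 * (cs.length - 1) * (c.C b - c.C A) := by
  intro cs
  induction cs with
  | nil =>
    intro a b hwfs _ _ _
    cases hwfs
    simp
  | cons t ts ih =>
    intro a b hwfs hAa hbn hmem
    cases hwfs with
    | cons _ _ _ b1 _ h1 h2 =>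
      have hab1 : a ≤ b1 := h1.le_bounds
      have hb1b : b1 ≤ b := h2.le_bounds
      have hCA_a : c.C A ≤ c.C a := c.mono _ _ hAa
      have hCa_b1 : c.C a ≤ c.C b1 := c.mono _ _ hab1
      have hCb1_b : c.C b1 ≤ c.C b := c.mono _ _ hb1b
      have hsa_mem := sMem c hXn hEDL a (by omega)
      have hhead : (Finset.Icc (-(L : ℤ)) (L : ℤ)).inf' ⟨0, by simp⟩
          (fun s' => TD X Y L t s' + 2 * (c.s A - s').natAbs)
          ≤ K * (c.C b1 - c.C a) + 2 * (c.C a - c.C A) := by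
        have hle := Finset.inf'_le (s := Finset.Icc (-(L : ℤ)) (L : ℤ))
          (fun s' => TD X Y L t s' + 2 * (c.s A - s').natAbs) hsa_mem
        have hTD := hmem t (List.mem_cons_self (a := t) (l := ts)) a b1 h1 (by omega)
        have habs := c.sdiff A a hAa
        have habs2 : 2 * (c.s A - c.s a).natAbs ≤ 2 * (c.C a - c.C A) := by omega
        exact le_trans hle (add_le_add hTD habs2)
      rw [List.map_cons, List.sum_cons]
      rcases ts with _ | ⟨t2, ts2⟩
      · cases h2
        simpa using hhead
      · have htail := ih b1 b h2 (by omega) hbn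
          (fun t' ht' => hmem t' (List.mem_cons_of_mem _ ht'))
        obtain ⟨d1, hd1⟩ : ∃ d, c.C a = c.C A + d := ⟨c.C a - c.C A, by omega⟩
        obtain ⟨d2, hd2⟩ : ∃ d, c.C b1 = c.C a + d := ⟨c.C b1 - c.C a, by omega⟩
        obtain ⟨d3, hd3⟩ : ∃ d, c.C b = c.C b1 + d := ⟨c.C b - c.C b1, by omega⟩
        rw [show c.C b1 - c.C a = d2 by omega, show c.C a - c.C A = d1 by omega] at hhead
        rw [show c.C b - c.C b1 = d3 by omega, show c.C b1 - c.C A = d1 + d2 by omega,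
            show c.C b - c.C A = d1 + d2 + d3 by omega] at htail
        rw [show c.C b - c.C a = d2 + d3 by omega, show c.C a - c.C A = d1 by omega,
            show c.C b - c.C A = d1 + d2 + d3 by omega]
        simp only [List.length_cons, Nat.add_sub_cancel] at htail ⊢
        refine le_trans (add_le_add hhead htail) ?_
        calc (K * d2 + 2 * d1) + (K * d3 + 2 * (d1 + d2) + 2 * ts2.length * (d1 + d2 + d3))
            = K * (d2 + d3) + 2 * d1 + (2 * (d1 + d2) + 2 * ts2.length * (d1 + d2 + d3)) := by
              ring
          _ ≤ K * (d2 + d3) + 2 * d1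
              + (2 * (d1 + d2 + d3) + 2 * ts2.length * (d1 + d2 + d3)) :=
              add_le_add_right (add_le_add_left
                (by omega : 2 * (d1 + d2) ≤ 2 * (d1 + d2 + d3)) _) _
          _ = K * (d2 + d3) + 2 * d1 + 2 * (ts2.length + 1) * (d1 + d2 + d3) := by ring

theorem tree_bound {X Y : List α} (c : Cert X Y) {n L ℓ : ℕ} (hXn : X.length = n)
    (hEDL : ED X Y ≤ L) :
    ∀ (N : ℕ) (t : PTree), sizeOf t ≤ N → ∀ a b H, PTree.WF t a b → b ≤ n →
      PTree.maxDeg t ≤ ℓ → PTree.height t ≤ H →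
      TD X Y L t (c.s a) ≤ (2 * (ℓ - 1) * H + 1) * (c.C b - c.C a) := by
  intro N
  induction N with
  | zero =>
    intro t ht
    exfalso
    cases t <;> simp at ht <;> omega
  | succ N IHN =>
    intro t ht a b H hwf hbn hdeg hht
    cases hwf with
    | leaf =>
      have hleaf := c.leaf a (by omega)
      have h1 : TD X Y L (.leaf a) (c.s a) =
          ED (strSlice X a (a + 1)) (strSliceZ Y ((a : ℤ) + c.s a) ((a : ℤ) + 1 + c.s a)) := by
        simp [TD]
      rw [h1]
      calc ED (strSlice X a (a + 1)) (strSliceZ Y ((a : ℤ) + c.s a) ((a : ℤ) + 1 + c.s a))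
          ≤ c.C (a + 1) - c.C a := hleaf
        _ ≤ (2 * (ℓ - 1) * H + 1) * (c.C (a + 1) - c.C a) :=
            Nat.le_mul_of_pos_left _ (by omega)
    | node _ _ cs hne hcs =>
      -- here a b : ℕ, tree = node a b cs
      have hheight : (cs.map PTree.height).foldr max 0 + 1 ≤ H := by
        rw [← height_node a b cs]; exact hht
      obtain ⟨H', rfl⟩ : ∃ H', H = H' + 1 := ⟨H - 1, by omega⟩
      have hdegs : max cs.length ((cs.map PTree.maxDeg).foldr max 0) ≤ ℓ := by
        rw [← maxDeg_node a b cs]; exact hdeg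
      have hlen : cs.length ≤ ℓ := le_trans (le_max_left _ _) hdegs
      have hmem : ∀ t' ∈ cs, ∀ a' b', PTree.WF t' a' b' → b' ≤ n →
          TD X Y L t' (c.s a') ≤ (2 * (ℓ - 1) * H' + 1) * (c.C b' - c.C a') := by
        intro t' ht' a' b' hwf' hb'
        refine IHN t' ?_ a' b' H' hwf' hb' ?_ ?_
        · have := List.sizeOf_lt_of_mem ht'
          have : sizeOf (PTree.node a b cs) ≤ N + 1 := ht
          simp only [PTree.node.sizeOf_spec] at this
          omega
        · calc PTree.maxDeg t' ≤ (cs.map PTree.maxDeg).foldr max 0 :=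
              le_foldr_max (List.mem_map_of_mem (f := PTree.maxDeg) ht')
            _ ≤ ℓ := le_trans (le_max_right _ _) hdegs
        · calc PTree.height t' ≤ (cs.map PTree.height).foldr max 0 :=
              le_foldr_max (List.mem_map_of_mem (f := PTree.height) ht')
            _ ≤ H' := by omega
      have hlb := list_bound c hXn hEDL (2 * (ℓ - 1) * H' + 1) a cs a b hcs le_rfl hbn hmem
      rw [TD_node]
      refine le_trans hlb ?_
      rw [show c.C a - c.C a = 0 by omega]
      obtain ⟨D, hD⟩ : ∃ D, c.C b - c.C a = D := ⟨_, rfl⟩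
      rw [hD]
      calc (2 * (ℓ - 1) * H' + 1) * D + 2 * 0 + 2 * (cs.length - 1) * D
          = ((2 * (ℓ - 1) * H' + 1) + 2 * (cs.length - 1)) * D := by ring
        _ ≤ ((2 * (ℓ - 1) * H' + 1) + 2 * (ℓ - 1)) * D :=
            Nat.mul_le_mul_right _ (by omega)
        _ = (2 * (ℓ - 1) * (H' + 1) + 1) * D := by ring

end Main

/-- Upper bound on the shift-restricted tree distance: if the partition tree has maximum
degree `ℓ` and height at most `h`, and `ED(X, Y) ≤ L`, then at the root (shift 0)
`TD^L(X, Y) ≤ (2(ℓ−1)h + 1) · ED(X, Y)`. -/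
theorem td_le_ed {α : Type*} [DecidableEq α] (X Y : List α) (n : ℕ)
    (hX : X.length = n) (hY : Y.length = n) (L : ℕ) (t : PTree) (hwf : PTree.WF t 0 n)
    (ℓ h : ℕ) (hdeg : PTree.maxDeg t ≤ ℓ) (hht : PTree.height t ≤ h)
    (hED : ED X Y ≤ L) :
    TD X Y L t 0 ≤ (2 * (ℓ - 1) * h + 1) * ED X Y := by
  obtain ⟨c⟩ := cert_nonempty X Y
  have h0 := c.hs0
  have hmain := tree_bound c hX hED (sizeOf t) t le_rfl 0 n h hwf le_rfl hdeg hht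
  rw [h0] at hmain
  have h1 : c.C n - c.C 0 ≤ ED X Y := by
    have h2 := c.top
    rw [hX] at h2
    have h3 := c.hC0
    omega
  calc TD X Y L t 0 ≤ (2 * (ℓ - 1) * h + 1) * (c.C n - c.C 0) := hmain
    _ ≤ (2 * (ℓ - 1) * h + 1) * ED X Y := Nat.mul_le_mul_left _ h1
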